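/- In PG(3,2), the stabilizer G_2 of the twisted cubic acts on the 35 lines of PG(3,2) with exactly 6 orbits, of sizes 3, 1, 3, 4, 12, and 12. -/

import Mathlib

/-- Coordinate vectors of the points of the twisted cubic in `PG(3,2)`. -/
def cubicVecs2 : Set (Fin 4 → ZMod 2) :=
  {![0, 0, 0, 1], ![1, 1, 1, 1], ![1, 0, 0, 0]}

/-- The lines of `PG(3,2)`: `2`-dimensional subspaces of `F₂⁴`. -/
def Line2 : Type :=
  {W : Submodule (ZMod 2) (Fin 4 → ZMod 2) // Module.finrank (ZMod 2) W = 2}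

/-- The orbit of a line of `PG(3,2)` under the full stabilizer `G₂` of the twisted
cubic (over `F₂` points correspond to nonzero vectors, so a projectivity is an
invertible linear map `g`, fixing the cubic iff `g '' cubicVecs2 = cubicVecs2`). -/
def lineOrbit2 (l : Line2) : Set Line2 :=
  {l' | ∃ g : (Fin 4 → ZMod 2) ≃ₗ[ZMod 2] (Fin 4 → ZMod 2),
    (⇑g '' cubicVecs2 = cubicVecs2) ∧
    Submodule.map (g : (Fin 4 → ZMod 2) →ₗ[ZMod 2] (Fin 4 → ZMod 2)) l.1 = l'.1}

abbrev V : Type := Fin 4 → ZMod 2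
def e0 : V := ![1,0,0,0]
def e1 : V := ![0,1,0,0]
def e2 : V := ![0,0,1,0]
def e3 : V := ![0,0,0,1]
def u : V := ![1,1,1,1]

def pl (a b : V) : Submodule (ZMod 2) V := Submodule.span (ZMod 2) {a, b}
def memPl (x a b : V) : Prop := x = 0 ∨ x = a ∨ x = b ∨ x = a + b
instance (x a b : V) : Decidable (memPl x a b) := by unfold memPl; infer_instance

lemma zmod2_cases (p : ZMod 2) : p = 0 ∨ p = 1 := by revert p; decide

lemma mem_pl {x a b : V} : x ∈ pl a b ↔ memPl x a b := by
  rw [pl, Submodule.mem_span_pair]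
  constructor
  · rintro ⟨p, q, rfl⟩
    rcases zmod2_cases p with rfl | rfl <;> rcases zmod2_cases q with rfl | rfl <;>
      simp [memPl]
  · rintro (rfl | rfl | rfl | rfl)
    exacts [⟨0, 0, by simp⟩, ⟨1, 0, by simp⟩, ⟨0, 1, by simp⟩, ⟨1, 1, by simp⟩]

def plEq (a b c d : V) : Prop := memPl a c d ∧ memPl b c d ∧ memPl c a b ∧ memPl d a b
instance (a b c d : V) : Decidable (plEq a b c d) := by unfold plEq; infer_instance

lemma pl_le {a b c d : V} (h1 : memPl a c d) (h2 : memPl b c d) : pl a b ≤ pl c d := by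
  rw [pl, Submodule.span_le]
  rintro x (rfl | rfl) <;> [exact mem_pl.2 h1; exact mem_pl.2 h2]

lemma plEq_eq {a b c d : V} (h : plEq a b c d) : pl a b = pl c d :=
  le_antisymm (pl_le h.1 h.2.1) (pl_le h.2.2.1 h.2.2.2)

lemma plEq_of_eq {a b c d : V} (h : pl a b = pl c d) : plEq a b c d := by
  refine ⟨?_, ?_, ?_, ?_⟩ <;> rw [← mem_pl]
  · exact h ▸ mem_pl.2 (Or.inr (Or.inl rfl))
  · exact h ▸ mem_pl.2 (Or.inr (Or.inr (Or.inl rfl)))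
  · exact h.symm ▸ mem_pl.2 (Or.inr (Or.inl rfl))
  · exact h.symm ▸ mem_pl.2 (Or.inr (Or.inr (Or.inl rfl)))

lemma finrank_pl {a b : V} (ha : a ≠ 0) (hb : b ≠ 0) (hab : a ≠ b) :
    Module.finrank (ZMod 2) (pl a b) = 2 := by
  have hli : LinearIndependent (ZMod 2) ![a, b] := by
    rw [LinearIndependent.pair_iff]
    intro s t hst
    rcases zmod2_cases s with rfl | rfl <;> rcases zmod2_cases t with rfl | rfl
    · exact ⟨rfl, rfl⟩
    · rw [zero_smul, one_smul, zero_add] at hst; exact absurd hst hb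
    · rw [zero_smul, one_smul, add_zero] at hst; exact absurd hst ha
    · rw [one_smul, one_smul] at hst
      exact absurd (by rwa [← sub_eq_zero, CharTwo.sub_eq_add]) hab
  have h2 := finrank_span_eq_card (R := ZMod 2) hli
  have hr : Set.range ![a, b] = {a, b} := by
    ext x; simp [Matrix.range_cons, Matrix.range_empty]; tauto
  rw [hr] at h2
  exact h2

lemma line_decomp (l : Line2) : ∃ a b : V, a ≠ 0 ∧ b ≠ 0 ∧ a ≠ b ∧ l.1 = pl a b := by
  obtain ⟨W, hW⟩ := l
  have : FiniteDimensional (ZMod 2) W := FiniteDimensional.of_finrank_eq_succ (n := 1) hW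
  let B := Module.finBasisOfFinrankEq (ZMod 2) W hW
  refine ⟨B 0, B 1, ?_, ?_, ?_, ?_⟩
  · simpa using (B.linearIndependent.ne_zero 0)
  · simpa using (B.linearIndependent.ne_zero 1)
  · intro h
    have h01 : B 0 = B 1 := Subtype.val_injective h
    have := B.injective h01
    simp at this
  · show W = _
    have h1 : Submodule.span (ZMod 2) (Set.range (B : Fin 2 → W)) = ⊤ := B.span_eq
    have h2 : W = Submodule.map W.subtype ⊤ := by simp
    refine h2.trans ?_
    rw [← h1, Submodule.map_span]
    unfold pl
    congr 1
    ext x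
    simp only [Set.mem_image, Set.mem_range, Set.mem_insert_iff, Set.mem_singleton_iff]
    constructor
    · rintro ⟨y, ⟨i, rfl⟩, rfl⟩
      fin_cases i
      · exact Or.inl rfl
      · exact Or.inr rfl
    · rintro (rfl | rfl)
      exacts [⟨B 0, ⟨0, rfl⟩, rfl⟩, ⟨B 1, ⟨1, rfl⟩, rfl⟩]

def repA : Fin 35 → V := ![![1,0,0,0], ![1,0,0,0], ![1,0,0,0], ![1,0,0,0], ![1,0,0,0], ![1,0,0,0], ![1,0,0,0], ![0,1,0,0], ![0,1,0,0], ![0,1,0,0], ![0,1,0,0], ![0,1,0,0], ![0,1,0,0], ![1,1,0,0], ![1,1,0,0], ![1,1,0,0], ![1,1,0,0], ![1,1,0,0], ![1,1,0,0], ![0,0,1,0], ![0,0,1,0], ![0,0,1,0], ![0,0,1,0], ![1,0,1,0], ![1,0,1,0], ![1,0,1,0], ![1,0,1,0], ![0,1,1,0], ![0,1,1,0], ![0,1,1,0], ![0,1,1,0], ![1,1,1,0], ![1,1,1,0], ![1,1,1,0], ![1,1,1,0]]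
def repB : Fin 35 → V := ![![0,1,0,0], ![0,0,1,0], ![0,1,1,0], ![0,0,0,1], ![0,1,0,1], ![0,0,1,1], ![0,1,1,1], ![0,0,1,0], ![1,0,1,0], ![0,0,0,1], ![1,0,0,1], ![0,0,1,1], ![1,0,1,1], ![0,0,1,0], ![1,0,1,0], ![0,0,0,1], ![1,0,0,1], ![0,0,1,1], ![1,0,1,1], ![0,0,0,1], ![1,0,0,1], ![0,1,0,1], ![1,1,0,1], ![0,0,0,1], ![1,0,0,1], ![0,1,0,1], ![1,1,0,1], ![0,0,0,1], ![1,0,0,1], ![0,1,0,1], ![1,1,0,1], ![0,0,0,1], ![1,0,0,1], ![0,1,0,1], ![1,1,0,1]]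

lemma rep_good : ∀ j : Fin 35, repA j ≠ 0 ∧ repB j ≠ 0 ∧ repA j ≠ repB j := by decide

def lineOf (j : Fin 35) : Line2 :=
  ⟨pl (repA j) (repB j), finrank_pl (rep_good j).1 (rep_good j).2.1 (rep_good j).2.2⟩

set_option maxRecDepth 40000 in
set_option maxHeartbeats 4000000 in
lemma plEq_inj : ∀ i j : Fin 35, plEq (repA i) (repB i) (repA j) (repB j) → i = j := by
  decide

lemma lineOf_inj : Function.Injective lineOf := fun i j h =>
  plEq_inj i j (plEq_of_eq (congrArg Subtype.val h))

set_option maxRecDepth 40000 in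
set_option maxHeartbeats 4000000 in
lemma lineOf_surj : Function.Surjective lineOf := by
  intro l
  obtain ⟨a, b, ha, hb, hab, hl⟩ := line_decomp l
  have key : ∀ a b : V, a ≠ 0 → b ≠ 0 → a ≠ b → ∃ j : Fin 35, plEq a b (repA j) (repB j) :=
    by decide
  obtain ⟨j, hj⟩ := key a b ha hb hab
  exact ⟨j, (Subtype.ext (hl.trans (plEq_eq hj))).symm⟩

lemma card_Line2 : Nat.card Line2 = 35 := by
  rw [Nat.card_congr (Equiv.ofBijective lineOf ⟨lineOf_inj, lineOf_surj⟩).symm]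
  simp

def Lmap (c : Fin 4 → V) : V →ₗ[ZMod 2] V where
  toFun x := x 0 • c 0 + x 1 • c 1 + x 2 • c 2 + x 3 • c 3
  map_add' := by intro x y; simp only [Pi.add_apply, add_smul]; abel
  map_smul' := by
    intro m x
    simp only [Pi.smul_apply, smul_eq_mul, RingHom.id_apply, mul_smul, smul_add]

def Emap (c c' : Fin 4 → V) (h : ∀ x, Lmap c (Lmap c' x) = x)
    (h' : ∀ x, Lmap c' (Lmap c x) = x) : V ≃ₗ[ZMod 2] V :=
  LinearEquiv.ofLinear (Lmap c) (Lmap c') (LinearMap.ext h) (LinearMap.ext h')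

lemma Emap_coe (c c' h h') : ⇑(Emap c c' h h') = ⇑(Lmap c) := rfl
lemma Emap_coeL (c c' h h') :
    ((Emap c c' h h' : V ≃ₗ[ZMod 2] V) : V →ₗ[ZMod 2] V) = Lmap c := rfl

lemma map_pl (f : V →ₗ[ZMod 2] V) (a b : V) :
    Submodule.map f (pl a b) = pl (f a) (f b) := by
  unfold pl
  rw [Submodule.map_span]
  congr 1
  exact Set.image_pair f a b

lemma img_cubic (c c' h h')
    (H : ∀ v : V, (v = Lmap c ![0,0,0,1] ∨ v = Lmap c ![1,1,1,1] ∨ v = Lmap c ![1,0,0,0]) ↔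
      (v = ![0,0,0,1] ∨ v = ![1,1,1,1] ∨ v = ![1,0,0,0])) :
    ⇑(Emap c c' h h') '' cubicVecs2 = cubicVecs2 := by
  rw [Emap_coe]
  show (Lmap c) '' {![0,0,0,1], ![1,1,1,1], ![1,0,0,0]} = _
  rw [Set.image_insert_eq, Set.image_insert_eq, Set.image_singleton]
  ext v
  simp only [Set.mem_insert_iff, Set.mem_singleton_iff]
  exact H v

lemma wit_helper {i j : Fin 35} (c c' : Fin 4 → V) (h : ∀ x, Lmap c (Lmap c' x) = x)
    (h' : ∀ x, Lmap c' (Lmap c x) = x)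
    (H : ∀ v : V, (v = Lmap c ![0,0,0,1] ∨ v = Lmap c ![1,1,1,1] ∨ v = Lmap c ![1,0,0,0]) ↔
      (v = ![0,0,0,1] ∨ v = ![1,1,1,1] ∨ v = ![1,0,0,0]))
    (Hpl : plEq (Lmap c (repA i)) (Lmap c (repB i)) (repA j) (repB j)) :
    lineOf j ∈ lineOrbit2 (lineOf i) := by
  refine ⟨Emap c c' h h', img_cubic c c' h h' H, ?_⟩
  show Submodule.map _ (pl (repA i) (repB i)) = pl (repA j) (repB j)
  rw [Emap_coeL, map_pl]
  exact plEq_eq Hpl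

lemma map_line {i : Fin 35} {g : V ≃ₗ[ZMod 2] V} {l' : Line2}
    (hmap : Submodule.map (g : V →ₗ[ZMod 2] V) (lineOf i).1 = l'.1) :
    l'.1 = pl (g (repA i)) (g (repB i)) := by
  rw [← hmap]
  show Submodule.map (g : V →ₗ[ZMod 2] V) (pl (repA i) (repB i)) = _
  rw [map_pl]
  simp only [LinearEquiv.coe_coe]

def Dprop (c0 c3 s : V) : Prop :=
  (c0 = e0 ∧ c3 = e3 ∧ s = u) ∨ (c0 = e0 ∧ c3 = u ∧ s = e3) ∨
  (c0 = e3 ∧ c3 = e0 ∧ s = u) ∨ (c0 = e3 ∧ c3 = u ∧ s = e0) ∨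
  (c0 = u ∧ c3 = e0 ∧ s = e3) ∨ (c0 = u ∧ c3 = e3 ∧ s = e0)

lemma mem_cubic_iff {v : V} : v ∈ cubicVecs2 ↔ (v = e3 ∨ v = u ∨ v = e0) := by
  simp [cubicVecs2, e0, e3, u, Set.mem_insert_iff]

set_option maxHeartbeats 2000000 in
lemma toD (g : V ≃ₗ[ZMod 2] V) (himg : ⇑g '' cubicVecs2 = cubicVecs2) :
    Dprop (g e0) (g e3) (g u) := by
  have h1 : g e0 ∈ cubicVecs2 :=
    himg ▸ Set.mem_image_of_mem _ (mem_cubic_iff.2 (Or.inr (Or.inr rfl)))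
  have h8 : g e3 ∈ cubicVecs2 :=
    himg ▸ Set.mem_image_of_mem _ (mem_cubic_iff.2 (Or.inl rfl))
  have h15 : g u ∈ cubicVecs2 :=
    himg ▸ Set.mem_image_of_mem _ (mem_cubic_iff.2 (Or.inr (Or.inl rfl)))
  rw [mem_cubic_iff] at h1 h8 h15
  have hinj := g.injective
  unfold Dprop
  rcases h1 with e | e | e <;> rcases h8 with f | f | f <;> rcases h15 with k | k | k <;>
    first
      | (exfalso; exact absurd (hinj (e.trans f.symm)) (by decide))
      | (exfalso; exact absurd (hinj (e.trans k.symm)) (by decide))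
      | (exfalso; exact absurd (hinj (f.trans k.symm)) (by decide))
      | tauto

def indep (c0 c1 c2 c3 : V) : Prop :=
  ∀ x : V, x 0 • c0 + x 1 • c1 + x 2 • c2 + x 3 • c3 = 0 → x = 0
instance (c0 c1 c2 c3 : V) : Decidable (indep c0 c1 c2 c3) := by unfold indep; infer_instance

lemma e_decomp : ∀ x : V, x = x 0 • e0 + x 1 • e1 + x 2 • e2 + x 3 • e3 := by decide

lemma g_indep (g : V ≃ₗ[ZMod 2] V) : indep (g e0) (g e1) (g e2) (g e3) := by
  intro x hx
  have hg : g (x 0 • e0 + x 1 • e1 + x 2 • e2 + x 3 • e3) = 0 := by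
    simp only [map_add, map_smul]; exact hx
  have h0 : x 0 • e0 + x 1 • e1 + x 2 • e2 + x 3 • e3 = 0 := by
    apply g.injective; rw [map_zero]; exact hg
  exact (e_decomp x).trans h0

lemma g_u (g : V ≃ₗ[ZMod 2] V) : g u = g e0 + g e1 + g e2 + g e3 := by
  rw [show u = e0 + e1 + e2 + e3 by decide]
  simp only [map_add]

lemma c2_z : ∀ a b c d e : ZMod 2, e = a + b + c + d → c = a + b + d + e := by decide

lemma c2_eqV (c0 c1 c2 c3 s : V) (h : s = c0 + c1 + c2 + c3) : c2 = c0 + c1 + c3 + s :=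
  funext fun i => c2_z _ _ _ _ _ (congrFun h i)

lemma orbit_refl (l : Line2) : l ∈ lineOrbit2 l := by
  refine ⟨LinearEquiv.refl _ _, ?_, ?_⟩
  · exact Set.image_id cubicVecs2
  · show Submodule.map LinearMap.id l.1 = l.1
    simp

lemma orbit_eq_of_mem {l l' : Line2} (h : l' ∈ lineOrbit2 l) :
    lineOrbit2 l' = lineOrbit2 l := by
  obtain ⟨g, hg, hm⟩ := h
  ext l''
  constructor
  · rintro ⟨f, hf, hfm⟩
    refine ⟨g.trans f, ?_, ?_⟩
    · have hc : ⇑(g.trans f) = ⇑f ∘ ⇑g := rfl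
      rw [hc, Set.image_comp, hg, hf]
    · have hc : ((g.trans f : V ≃ₗ[ZMod 2] V) : V →ₗ[ZMod 2] V) =
        (f : V →ₗ[ZMod 2] V).comp (g : V →ₗ[ZMod 2] V) := rfl
      rw [hc, Submodule.map_comp, hm, hfm]
  · rintro ⟨f, hf, hfm⟩
    refine ⟨g.symm.trans f, ?_, ?_⟩
    · have hgs : ⇑g.symm '' cubicVecs2 = cubicVecs2 := by
        conv_lhs => rw [← hg]
        rw [← Set.image_comp]
        have : ⇑g.symm ∘ ⇑g = id := by
          funext x; exact g.symm_apply_apply x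
        rw [this, Set.image_id]
      have hc : ⇑(g.symm.trans f) = ⇑f ∘ ⇑g.symm := rfl
      rw [show ⇑(g.symm.trans f) = ⇑f ∘ ⇑g.symm from rfl, Set.image_comp, hgs, hf]
    · have hms : Submodule.map (g.symm : V →ₗ[ZMod 2] V) l'.1 = l.1 := by
        rw [← hm, ← Submodule.map_comp]
        have : (g.symm : V →ₗ[ZMod 2] V).comp (g : V →ₗ[ZMod 2] V) = LinearMap.id :=
          LinearMap.ext fun x => g.symm_apply_apply x
        rw [this, Submodule.map_id]
      have hc : ((g.symm.trans f : V ≃ₗ[ZMod 2] V) : V →ₗ[ZMod 2] V) =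
        (f : V →ₗ[ZMod 2] V).comp (g.symm : V →ₗ[ZMod 2] V) := rfl
      rw [hc, Submodule.map_comp, hms, hfm]

noncomputable instance : DecidableEq Line2 := Classical.decEq _
def I1 : Finset (Fin 35) := {2, 27, 28}
def Ck1 (c0 c1 c2 c3 : V) : Prop :=
  plEq (c0) (c1 + c2) (repA 2) (repB 2) ∨
  plEq (c0) (c1 + c2) (repA 27) (repB 27) ∨
  plEq (c0) (c1 + c2) (repA 28) (repB 28)
instance (c0 c1 c2 c3 : V) : Decidable (Ck1 c0 c1 c2 c3) := by unfold Ck1; infer_instance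
def O1' : Set Line2 := ↑(I1.image lineOf)
lemma mem_of_Ck1 {c0 c1 c2 c3 : V} {l' : Line2} (hC : Ck1 c0 c1 c2 c3)
    (hl : l'.1 = pl (c0) (c1 + c2)) : l' ∈ O1' := by
  rcases hC with h | h | h
  exacts [Finset.mem_coe.2 (Finset.mem_image.2 ⟨2, by decide, (Subtype.ext (hl.trans (plEq_eq h))).symm⟩),
    Finset.mem_coe.2 (Finset.mem_image.2 ⟨27, by decide, (Subtype.ext (hl.trans (plEq_eq h))).symm⟩),
    Finset.mem_coe.2 (Finset.mem_image.2 ⟨28, by decide, (Subtype.ext (hl.trans (plEq_eq h))).symm⟩)]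
set_option maxHeartbeats 1000000 in
lemma key1_p1 : ∀ c1 : V, indep e0 c1 (e0 + c1 + e3 + u) e3 →
    Ck1 e0 c1 (e0 + c1 + e3 + u) e3 := by decide
set_option maxHeartbeats 1000000 in
lemma key1_p2 : ∀ c1 : V, indep e0 c1 (e0 + c1 + u + e3) u →
    Ck1 e0 c1 (e0 + c1 + u + e3) u := by decide
set_option maxHeartbeats 1000000 in
lemma key1_p3 : ∀ c1 : V, indep e3 c1 (e3 + c1 + e0 + u) e0 →
    Ck1 e3 c1 (e3 + c1 + e0 + u) e0 := by decide
set_option maxHeartbeats 1000000 in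
lemma key1_p4 : ∀ c1 : V, indep e3 c1 (e3 + c1 + u + e0) u →
    Ck1 e3 c1 (e3 + c1 + u + e0) u := by decide
set_option maxHeartbeats 1000000 in
lemma key1_p5 : ∀ c1 : V, indep u c1 (u + c1 + e0 + e3) e0 →
    Ck1 u c1 (u + c1 + e0 + e3) e0 := by decide
set_option maxHeartbeats 1000000 in
lemma key1_p6 : ∀ c1 : V, indep u c1 (u + c1 + e3 + e0) e3 →
    Ck1 u c1 (u + c1 + e3 + e0) e3 := by decide
lemma orbit_sub1 : lineOrbit2 (lineOf 2) ⊆ O1' := by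
  rintro l' ⟨g, himg, hmap⟩
  have hl := map_line hmap
  rw [show repA (2 : Fin 35) = e0 by decide, show repB (2 : Fin 35) = e1 + e2 by decide] at hl
  try simp only [map_add] at hl
  have hD := toD g himg
  rcases hD with ⟨h0, h3, hs⟩ | ⟨h0, h3, hs⟩ | ⟨h0, h3, hs⟩ | ⟨h0, h3, hs⟩ | ⟨h0, h3, hs⟩ | ⟨h0, h3, hs⟩
  · have hc2 : g e2 = g e0 + g e1 + g e3 + u :=
      c2_eqV _ _ _ _ _ (hs.symm.trans (g_u g))
    have hind := g_indep g
    rw [hc2] at hind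
    rw [h0, h3] at hind
    have hK := key1_p1 (g e1) hind
    simp only [hc2, h0, h3] at hl
    exact mem_of_Ck1 hK hl
  · have hc2 : g e2 = g e0 + g e1 + g e3 + e3 :=
      c2_eqV _ _ _ _ _ (hs.symm.trans (g_u g))
    have hind := g_indep g
    rw [hc2] at hind
    rw [h0, h3] at hind
    have hK := key1_p2 (g e1) hind
    simp only [hc2, h0, h3] at hl
    exact mem_of_Ck1 hK hl
  · have hc2 : g e2 = g e0 + g e1 + g e3 + u :=
      c2_eqV _ _ _ _ _ (hs.symm.trans (g_u g))
    have hind := g_indep g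
    rw [hc2] at hind
    rw [h0, h3] at hind
    have hK := key1_p3 (g e1) hind
    simp only [hc2, h0, h3] at hl
    exact mem_of_Ck1 hK hl
  · have hc2 : g e2 = g e0 + g e1 + g e3 + e0 :=
      c2_eqV _ _ _ _ _ (hs.symm.trans (g_u g))
    have hind := g_indep g
    rw [hc2] at hind
    rw [h0, h3] at hind
    have hK := key1_p4 (g e1) hind
    simp only [hc2, h0, h3] at hl
    exact mem_of_Ck1 hK hl
  · have hc2 : g e2 = g e0 + g e1 + g e3 + e3 :=
      c2_eqV _ _ _ _ _ (hs.symm.trans (g_u g))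
    have hind := g_indep g
    rw [hc2] at hind
    rw [h0, h3] at hind
    have hK := key1_p5 (g e1) hind
    simp only [hc2, h0, h3] at hl
    exact mem_of_Ck1 hK hl
  · have hc2 : g e2 = g e0 + g e1 + g e3 + e0 :=
      c2_eqV _ _ _ _ _ (hs.symm.trans (g_u g))
    have hind := g_indep g
    rw [hc2] at hind
    rw [h0, h3] at hind
    have hK := key1_p6 (g e1) hind
    simp only [hc2, h0, h3] at hl
    exact mem_of_Ck1 hK hl
lemma w1_2 : lineOf 2 ∈ lineOrbit2 (lineOf 2) :=
  wit_helper (i := 2) (j := 2) ![![1,0,0,0], ![0,1,0,0], ![0,0,1,0], ![0,0,0,1]] ![![1,0,0,0], ![0,1,0,0], ![0,0,1,0], ![0,0,0,1]] (by decide) (by decide) (by decide) (by decide)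
lemma w1_27 : lineOf 27 ∈ lineOrbit2 (lineOf 2) :=
  wit_helper (i := 2) (j := 27) ![![0,0,0,1], ![0,1,0,0], ![0,0,1,0], ![1,0,0,0]] ![![0,0,0,1], ![0,1,0,0], ![0,0,1,0], ![1,0,0,0]] (by decide) (by decide) (by decide) (by decide)
lemma w1_28 : lineOf 28 ∈ lineOrbit2 (lineOf 2) :=
  wit_helper (i := 2) (j := 28) ![![1,1,1,1], ![0,1,0,0], ![0,0,1,0], ![1,0,0,0]] ![![0,0,0,1], ![0,1,0,0], ![0,0,1,0], ![1,1,1,1]] (by decide) (by decide) (by decide) (by decide)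
lemma orbit_eq1 : lineOrbit2 (lineOf 2) = O1' := by
  refine Set.Subset.antisymm orbit_sub1 ?_
  intro l' hl'
  rw [O1', Finset.mem_coe, Finset.mem_image] at hl'
  obtain ⟨j, hj, rfl⟩ := hl'
  fin_cases hj
  exacts [w1_2, w1_27, w1_28]
def I2 : Finset (Fin 35) := {32}
def Ck2 (c0 c1 c2 c3 : V) : Prop :=
  plEq (c0 + c1 + c2) (c0 + c3) (repA 32) (repB 32)
instance (c0 c1 c2 c3 : V) : Decidable (Ck2 c0 c1 c2 c3) := by unfold Ck2; infer_instance
def O2' : Set Line2 := ↑(I2.image lineOf)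
lemma mem_of_Ck2 {c0 c1 c2 c3 : V} {l' : Line2} (hC : Ck2 c0 c1 c2 c3)
    (hl : l'.1 = pl (c0 + c1 + c2) (c0 + c3)) : l' ∈ O2' := by
  have h : plEq (c0 + c1 + c2) (c0 + c3) (repA 32) (repB 32) := hC
  exact Finset.mem_coe.2 (Finset.mem_image.2 ⟨32, by decide, (Subtype.ext (hl.trans (plEq_eq h))).symm⟩)
set_option maxHeartbeats 1000000 in
lemma key2_p1 : ∀ c1 : V, indep e0 c1 (e0 + c1 + e3 + u) e3 →
    Ck2 e0 c1 (e0 + c1 + e3 + u) e3 := by decide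
set_option maxHeartbeats 1000000 in
lemma key2_p2 : ∀ c1 : V, indep e0 c1 (e0 + c1 + u + e3) u →
    Ck2 e0 c1 (e0 + c1 + u + e3) u := by decide
set_option maxHeartbeats 1000000 in
lemma key2_p3 : ∀ c1 : V, indep e3 c1 (e3 + c1 + e0 + u) e0 →
    Ck2 e3 c1 (e3 + c1 + e0 + u) e0 := by decide
set_option maxHeartbeats 1000000 in
lemma key2_p4 : ∀ c1 : V, indep e3 c1 (e3 + c1 + u + e0) u →
    Ck2 e3 c1 (e3 + c1 + u + e0) u := by decide
set_option maxHeartbeats 1000000 in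
lemma key2_p5 : ∀ c1 : V, indep u c1 (u + c1 + e0 + e3) e0 →
    Ck2 u c1 (u + c1 + e0 + e3) e0 := by decide
set_option maxHeartbeats 1000000 in
lemma key2_p6 : ∀ c1 : V, indep u c1 (u + c1 + e3 + e0) e3 →
    Ck2 u c1 (u + c1 + e3 + e0) e3 := by decide
lemma orbit_sub2 : lineOrbit2 (lineOf 32) ⊆ O2' := by
  rintro l' ⟨g, himg, hmap⟩
  have hl := map_line hmap
  rw [show repA (32 : Fin 35) = e0 + e1 + e2 by decide, show repB (32 : Fin 35) = e0 + e3 by decide] at hl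
  try simp only [map_add] at hl
  have hD := toD g himg
  rcases hD with ⟨h0, h3, hs⟩ | ⟨h0, h3, hs⟩ | ⟨h0, h3, hs⟩ | ⟨h0, h3, hs⟩ | ⟨h0, h3, hs⟩ | ⟨h0, h3, hs⟩
  · have hc2 : g e2 = g e0 + g e1 + g e3 + u :=
      c2_eqV _ _ _ _ _ (hs.symm.trans (g_u g))
    have hind := g_indep g
    rw [hc2] at hind
    rw [h0, h3] at hind
    have hK := key2_p1 (g e1) hind
    simp only [hc2, h0, h3] at hl
    exact mem_of_Ck2 hK hl
  · have hc2 : g e2 = g e0 + g e1 + g e3 + e3 :=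
      c2_eqV _ _ _ _ _ (hs.symm.trans (g_u g))
    have hind := g_indep g
    rw [hc2] at hind
    rw [h0, h3] at hind
    have hK := key2_p2 (g e1) hind
    simp only [hc2, h0, h3] at hl
    exact mem_of_Ck2 hK hl
  · have hc2 : g e2 = g e0 + g e1 + g e3 + u :=
      c2_eqV _ _ _ _ _ (hs.symm.trans (g_u g))
    have hind := g_indep g
    rw [hc2] at hind
    rw [h0, h3] at hind
    have hK := key2_p3 (g e1) hind
    simp only [hc2, h0, h3] at hl
    exact mem_of_Ck2 hK hl
  · have hc2 : g e2 = g e0 + g e1 + g e3 + e0 :=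
      c2_eqV _ _ _ _ _ (hs.symm.trans (g_u g))
    have hind := g_indep g
    rw [hc2] at hind
    rw [h0, h3] at hind
    have hK := key2_p4 (g e1) hind
    simp only [hc2, h0, h3] at hl
    exact mem_of_Ck2 hK hl
  · have hc2 : g e2 = g e0 + g e1 + g e3 + e3 :=
      c2_eqV _ _ _ _ _ (hs.symm.trans (g_u g))
    have hind := g_indep g
    rw [hc2] at hind
    rw [h0, h3] at hind
    have hK := key2_p5 (g e1) hind
    simp only [hc2, h0, h3] at hl
    exact mem_of_Ck2 hK hl
  · have hc2 : g e2 = g e0 + g e1 + g e3 + e0 :=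
      c2_eqV _ _ _ _ _ (hs.symm.trans (g_u g))
    have hind := g_indep g
    rw [hc2] at hind
    rw [h0, h3] at hind
    have hK := key2_p6 (g e1) hind
    simp only [hc2, h0, h3] at hl
    exact mem_of_Ck2 hK hl
lemma w2_32 : lineOf 32 ∈ lineOrbit2 (lineOf 32) :=
  wit_helper (i := 32) (j := 32) ![![1,0,0,0], ![0,1,0,0], ![0,0,1,0], ![0,0,0,1]] ![![1,0,0,0], ![0,1,0,0], ![0,0,1,0], ![0,0,0,1]] (by decide) (by decide) (by decide) (by decide)
lemma orbit_eq2 : lineOrbit2 (lineOf 32) = O2' := by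
  refine Set.Subset.antisymm orbit_sub2 ?_
  intro l' hl'
  rw [O2', Finset.mem_coe, Finset.mem_image] at hl'
  obtain ⟨j, hj, rfl⟩ := hl'
  fin_cases hj
  exacts [w2_32]
def I3 : Finset (Fin 35) := {3, 6, 31}
def Ck3 (c0 c1 c2 c3 : V) : Prop :=
  plEq (c0) (c3) (repA 3) (repB 3) ∨
  plEq (c0) (c3) (repA 6) (repB 6) ∨
  plEq (c0) (c3) (repA 31) (repB 31)
instance (c0 c1 c2 c3 : V) : Decidable (Ck3 c0 c1 c2 c3) := by unfold Ck3; infer_instance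
def O3' : Set Line2 := ↑(I3.image lineOf)
lemma mem_of_Ck3 {c0 c1 c2 c3 : V} {l' : Line2} (hC : Ck3 c0 c1 c2 c3)
    (hl : l'.1 = pl (c0) (c3)) : l' ∈ O3' := by
  rcases hC with h | h | h
  exacts [Finset.mem_coe.2 (Finset.mem_image.2 ⟨3, by decide, (Subtype.ext (hl.trans (plEq_eq h))).symm⟩),
    Finset.mem_coe.2 (Finset.mem_image.2 ⟨6, by decide, (Subtype.ext (hl.trans (plEq_eq h))).symm⟩),
    Finset.mem_coe.2 (Finset.mem_image.2 ⟨31, by decide, (Subtype.ext (hl.trans (plEq_eq h))).symm⟩)]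
set_option maxHeartbeats 1000000 in
lemma key3_p1 : ∀ c1 : V, indep e0 c1 (e0 + c1 + e3 + u) e3 →
    Ck3 e0 c1 (e0 + c1 + e3 + u) e3 := by decide
set_option maxHeartbeats 1000000 in
lemma key3_p2 : ∀ c1 : V, indep e0 c1 (e0 + c1 + u + e3) u →
    Ck3 e0 c1 (e0 + c1 + u + e3) u := by decide
set_option maxHeartbeats 1000000 in
lemma key3_p3 : ∀ c1 : V, indep e3 c1 (e3 + c1 + e0 + u) e0 →
    Ck3 e3 c1 (e3 + c1 + e0 + u) e0 := by decide
set_option maxHeartbeats 1000000 in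
lemma key3_p4 : ∀ c1 : V, indep e3 c1 (e3 + c1 + u + e0) u →
    Ck3 e3 c1 (e3 + c1 + u + e0) u := by decide
set_option maxHeartbeats 1000000 in
lemma key3_p5 : ∀ c1 : V, indep u c1 (u + c1 + e0 + e3) e0 →
    Ck3 u c1 (u + c1 + e0 + e3) e0 := by decide
set_option maxHeartbeats 1000000 in
lemma key3_p6 : ∀ c1 : V, indep u c1 (u + c1 + e3 + e0) e3 →
    Ck3 u c1 (u + c1 + e3 + e0) e3 := by decide
lemma orbit_sub3 : lineOrbit2 (lineOf 3) ⊆ O3' := by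
  rintro l' ⟨g, himg, hmap⟩
  have hl := map_line hmap
  rw [show repA (3 : Fin 35) = e0 by decide, show repB (3 : Fin 35) = e3 by decide] at hl
  try simp only [map_add] at hl
  have hD := toD g himg
  rcases hD with ⟨h0, h3, hs⟩ | ⟨h0, h3, hs⟩ | ⟨h0, h3, hs⟩ | ⟨h0, h3, hs⟩ | ⟨h0, h3, hs⟩ | ⟨h0, h3, hs⟩
  · have hc2 : g e2 = g e0 + g e1 + g e3 + u :=
      c2_eqV _ _ _ _ _ (hs.symm.trans (g_u g))
    have hind := g_indep g
    rw [hc2] at hind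
    rw [h0, h3] at hind
    have hK := key3_p1 (g e1) hind
    simp only [hc2, h0, h3] at hl
    exact mem_of_Ck3 hK hl
  · have hc2 : g e2 = g e0 + g e1 + g e3 + e3 :=
      c2_eqV _ _ _ _ _ (hs.symm.trans (g_u g))
    have hind := g_indep g
    rw [hc2] at hind
    rw [h0, h3] at hind
    have hK := key3_p2 (g e1) hind
    simp only [hc2, h0, h3] at hl
    exact mem_of_Ck3 hK hl
  · have hc2 : g e2 = g e0 + g e1 + g e3 + u :=
      c2_eqV _ _ _ _ _ (hs.symm.trans (g_u g))
    have hind := g_indep g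
    rw [hc2] at hind
    rw [h0, h3] at hind
    have hK := key3_p3 (g e1) hind
    simp only [hc2, h0, h3] at hl
    exact mem_of_Ck3 hK hl
  · have hc2 : g e2 = g e0 + g e1 + g e3 + e0 :=
      c2_eqV _ _ _ _ _ (hs.symm.trans (g_u g))
    have hind := g_indep g
    rw [hc2] at hind
    rw [h0, h3] at hind
    have hK := key3_p4 (g e1) hind
    simp only [hc2, h0, h3] at hl
    exact mem_of_Ck3 hK hl
  · have hc2 : g e2 = g e0 + g e1 + g e3 + e3 :=
      c2_eqV _ _ _ _ _ (hs.symm.trans (g_u g))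
    have hind := g_indep g
    rw [hc2] at hind
    rw [h0, h3] at hind
    have hK := key3_p5 (g e1) hind
    simp only [hc2, h0, h3] at hl
    exact mem_of_Ck3 hK hl
  · have hc2 : g e2 = g e0 + g e1 + g e3 + e0 :=
      c2_eqV _ _ _ _ _ (hs.symm.trans (g_u g))
    have hind := g_indep g
    rw [hc2] at hind
    rw [h0, h3] at hind
    have hK := key3_p6 (g e1) hind
    simp only [hc2, h0, h3] at hl
    exact mem_of_Ck3 hK hl
lemma w3_3 : lineOf 3 ∈ lineOrbit2 (lineOf 3) :=
  wit_helper (i := 3) (j := 3) ![![1,0,0,0], ![0,1,0,0], ![0,0,1,0], ![0,0,0,1]] ![![1,0,0,0], ![0,1,0,0], ![0,0,1,0], ![0,0,0,1]] (by decide) (by decide) (by decide) (by decide)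
lemma w3_6 : lineOf 6 ∈ lineOrbit2 (lineOf 3) :=
  wit_helper (i := 3) (j := 6) ![![1,0,0,0], ![0,1,0,0], ![0,0,1,0], ![1,1,1,1]] ![![1,0,0,0], ![0,1,0,0], ![0,0,1,0], ![1,1,1,1]] (by decide) (by decide) (by decide) (by decide)
lemma w3_31 : lineOf 31 ∈ lineOrbit2 (lineOf 3) :=
  wit_helper (i := 3) (j := 31) ![![0,0,0,1], ![0,1,0,0], ![0,0,1,0], ![1,1,1,1]] ![![1,1,1,1], ![0,1,0,0], ![0,0,1,0], ![1,0,0,0]] (by decide) (by decide) (by decide) (by decide)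
lemma orbit_eq3 : lineOrbit2 (lineOf 3) = O3' := by
  refine Set.Subset.antisymm orbit_sub3 ?_
  intro l' hl'
  rw [O3', Finset.mem_coe, Finset.mem_image] at hl'
  obtain ⟨j, hj, rfl⟩ := hl'
  fin_cases hj
  exacts [w3_3, w3_6, w3_31]
def I4 : Finset (Fin 35) := {7, 14, 29, 30}
def Ck4 (c0 c1 c2 c3 : V) : Prop :=
  plEq (c1) (c2) (repA 7) (repB 7) ∨
  plEq (c1) (c2) (repA 14) (repB 14) ∨
  plEq (c1) (c2) (repA 29) (repB 29) ∨
  plEq (c1) (c2) (repA 30) (repB 30)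
instance (c0 c1 c2 c3 : V) : Decidable (Ck4 c0 c1 c2 c3) := by unfold Ck4; infer_instance
def O4' : Set Line2 := ↑(I4.image lineOf)
lemma mem_of_Ck4 {c0 c1 c2 c3 : V} {l' : Line2} (hC : Ck4 c0 c1 c2 c3)
    (hl : l'.1 = pl (c1) (c2)) : l' ∈ O4' := by
  rcases hC with h | h | h | h
  exacts [Finset.mem_coe.2 (Finset.mem_image.2 ⟨7, by decide, (Subtype.ext (hl.trans (plEq_eq h))).symm⟩),
    Finset.mem_coe.2 (Finset.mem_image.2 ⟨14, by decide, (Subtype.ext (hl.trans (plEq_eq h))).symm⟩),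
    Finset.mem_coe.2 (Finset.mem_image.2 ⟨29, by decide, (Subtype.ext (hl.trans (plEq_eq h))).symm⟩),
    Finset.mem_coe.2 (Finset.mem_image.2 ⟨30, by decide, (Subtype.ext (hl.trans (plEq_eq h))).symm⟩)]
set_option maxHeartbeats 1000000 in
lemma key4_p1 : ∀ c1 : V, indep e0 c1 (e0 + c1 + e3 + u) e3 →
    Ck4 e0 c1 (e0 + c1 + e3 + u) e3 := by decide
set_option maxHeartbeats 1000000 in
lemma key4_p2 : ∀ c1 : V, indep e0 c1 (e0 + c1 + u + e3) u →
    Ck4 e0 c1 (e0 + c1 + u + e3) u := by decide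
set_option maxHeartbeats 1000000 in
lemma key4_p3 : ∀ c1 : V, indep e3 c1 (e3 + c1 + e0 + u) e0 →
    Ck4 e3 c1 (e3 + c1 + e0 + u) e0 := by decide
set_option maxHeartbeats 1000000 in
lemma key4_p4 : ∀ c1 : V, indep e3 c1 (e3 + c1 + u + e0) u →
    Ck4 e3 c1 (e3 + c1 + u + e0) u := by decide
set_option maxHeartbeats 1000000 in
lemma key4_p5 : ∀ c1 : V, indep u c1 (u + c1 + e0 + e3) e0 →
    Ck4 u c1 (u + c1 + e0 + e3) e0 := by decide
set_option maxHeartbeats 1000000 in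
lemma key4_p6 : ∀ c1 : V, indep u c1 (u + c1 + e3 + e0) e3 →
    Ck4 u c1 (u + c1 + e3 + e0) e3 := by decide
lemma orbit_sub4 : lineOrbit2 (lineOf 7) ⊆ O4' := by
  rintro l' ⟨g, himg, hmap⟩
  have hl := map_line hmap
  rw [show repA (7 : Fin 35) = e1 by decide, show repB (7 : Fin 35) = e2 by decide] at hl
  try simp only [map_add] at hl
  have hD := toD g himg
  rcases hD with ⟨h0, h3, hs⟩ | ⟨h0, h3, hs⟩ | ⟨h0, h3, hs⟩ | ⟨h0, h3, hs⟩ | ⟨h0, h3, hs⟩ | ⟨h0, h3, hs⟩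
  · have hc2 : g e2 = g e0 + g e1 + g e3 + u :=
      c2_eqV _ _ _ _ _ (hs.symm.trans (g_u g))
    have hind := g_indep g
    rw [hc2] at hind
    rw [h0, h3] at hind
    have hK := key4_p1 (g e1) hind
    simp only [hc2, h0, h3] at hl
    exact mem_of_Ck4 hK hl
  · have hc2 : g e2 = g e0 + g e1 + g e3 + e3 :=
      c2_eqV _ _ _ _ _ (hs.symm.trans (g_u g))
    have hind := g_indep g
    rw [hc2] at hind
    rw [h0, h3] at hind
    have hK := key4_p2 (g e1) hind
    simp only [hc2, h0, h3] at hl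
    exact mem_of_Ck4 hK hl
  · have hc2 : g e2 = g e0 + g e1 + g e3 + u :=
      c2_eqV _ _ _ _ _ (hs.symm.trans (g_u g))
    have hind := g_indep g
    rw [hc2] at hind
    rw [h0, h3] at hind
    have hK := key4_p3 (g e1) hind
    simp only [hc2, h0, h3] at hl
    exact mem_of_Ck4 hK hl
  · have hc2 : g e2 = g e0 + g e1 + g e3 + e0 :=
      c2_eqV _ _ _ _ _ (hs.symm.trans (g_u g))
    have hind := g_indep g
    rw [hc2] at hind
    rw [h0, h3] at hind
    have hK := key4_p4 (g e1) hind
    simp only [hc2, h0, h3] at hl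
    exact mem_of_Ck4 hK hl
  · have hc2 : g e2 = g e0 + g e1 + g e3 + e3 :=
      c2_eqV _ _ _ _ _ (hs.symm.trans (g_u g))
    have hind := g_indep g
    rw [hc2] at hind
    rw [h0, h3] at hind
    have hK := key4_p5 (g e1) hind
    simp only [hc2, h0, h3] at hl
    exact mem_of_Ck4 hK hl
  · have hc2 : g e2 = g e0 + g e1 + g e3 + e0 :=
      c2_eqV _ _ _ _ _ (hs.symm.trans (g_u g))
    have hind := g_indep g
    rw [hc2] at hind
    rw [h0, h3] at hind
    have hK := key4_p6 (g e1) hind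
    simp only [hc2, h0, h3] at hl
    exact mem_of_Ck4 hK hl
lemma w4_7 : lineOf 7 ∈ lineOrbit2 (lineOf 7) :=
  wit_helper (i := 7) (j := 7) ![![1,0,0,0], ![0,1,0,0], ![0,0,1,0], ![0,0,0,1]] ![![1,0,0,0], ![0,1,0,0], ![0,0,1,0], ![0,0,0,1]] (by decide) (by decide) (by decide) (by decide)
lemma w4_14 : lineOf 14 ∈ lineOrbit2 (lineOf 7) :=
  wit_helper (i := 7) (j := 14) ![![1,0,0,0], ![1,1,0,0], ![1,0,1,0], ![0,0,0,1]] ![![1,0,0,0], ![1,1,0,0], ![1,0,1,0], ![0,0,0,1]] (by decide) (by decide) (by decide) (by decide)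
lemma w4_29 : lineOf 29 ∈ lineOrbit2 (lineOf 7) :=
  wit_helper (i := 7) (j := 29) ![![1,0,0,0], ![0,1,0,1], ![0,0,1,1], ![0,0,0,1]] ![![1,0,0,0], ![0,1,0,1], ![0,0,1,1], ![0,0,0,1]] (by decide) (by decide) (by decide) (by decide)
lemma w4_30 : lineOf 30 ∈ lineOrbit2 (lineOf 7) :=
  wit_helper (i := 7) (j := 30) ![![1,0,0,0], ![1,1,0,1], ![1,0,1,1], ![0,0,0,1]] ![![1,0,0,0], ![1,1,0,1], ![1,0,1,1], ![0,0,0,1]] (by decide) (by decide) (by decide) (by decide)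
lemma orbit_eq4 : lineOrbit2 (lineOf 7) = O4' := by
  refine Set.Subset.antisymm orbit_sub4 ?_
  intro l' hl'
  rw [O4', Finset.mem_coe, Finset.mem_image] at hl'
  obtain ⟨j, hj, rfl⟩ := hl'
  fin_cases hj
  exacts [w4_7, w4_14, w4_29, w4_30]
def I5 : Finset (Fin 35) := {0, 1, 4, 5, 9, 12, 15, 17, 19, 22, 23, 25}
def Ck5 (c0 c1 c2 c3 : V) : Prop :=
  plEq (c0) (c1) (repA 0) (repB 0) ∨
  plEq (c0) (c1) (repA 1) (repB 1) ∨
  plEq (c0) (c1) (repA 4) (repB 4) ∨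
  plEq (c0) (c1) (repA 5) (repB 5) ∨
  plEq (c0) (c1) (repA 9) (repB 9) ∨
  plEq (c0) (c1) (repA 12) (repB 12) ∨
  plEq (c0) (c1) (repA 15) (repB 15) ∨
  plEq (c0) (c1) (repA 17) (repB 17) ∨
  plEq (c0) (c1) (repA 19) (repB 19) ∨
  plEq (c0) (c1) (repA 22) (repB 22) ∨
  plEq (c0) (c1) (repA 23) (repB 23) ∨
  plEq (c0) (c1) (repA 25) (repB 25)
instance (c0 c1 c2 c3 : V) : Decidable (Ck5 c0 c1 c2 c3) := by unfold Ck5; infer_instance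
def O5' : Set Line2 := ↑(I5.image lineOf)
lemma mem_of_Ck5 {c0 c1 c2 c3 : V} {l' : Line2} (hC : Ck5 c0 c1 c2 c3)
    (hl : l'.1 = pl (c0) (c1)) : l' ∈ O5' := by
  rcases hC with h | h | h | h | h | h | h | h | h | h | h | h
  exacts [Finset.mem_coe.2 (Finset.mem_image.2 ⟨0, by decide, (Subtype.ext (hl.trans (plEq_eq h))).symm⟩),
    Finset.mem_coe.2 (Finset.mem_image.2 ⟨1, by decide, (Subtype.ext (hl.trans (plEq_eq h))).symm⟩),
    Finset.mem_coe.2 (Finset.mem_image.2 ⟨4, by decide, (Subtype.ext (hl.trans (plEq_eq h))).symm⟩),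
    Finset.mem_coe.2 (Finset.mem_image.2 ⟨5, by decide, (Subtype.ext (hl.trans (plEq_eq h))).symm⟩),
    Finset.mem_coe.2 (Finset.mem_image.2 ⟨9, by decide, (Subtype.ext (hl.trans (plEq_eq h))).symm⟩),
    Finset.mem_coe.2 (Finset.mem_image.2 ⟨12, by decide, (Subtype.ext (hl.trans (plEq_eq h))).symm⟩),
    Finset.mem_coe.2 (Finset.mem_image.2 ⟨15, by decide, (Subtype.ext (hl.trans (plEq_eq h))).symm⟩),
    Finset.mem_coe.2 (Finset.mem_image.2 ⟨17, by decide, (Subtype.ext (hl.trans (plEq_eq h))).symm⟩),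
    Finset.mem_coe.2 (Finset.mem_image.2 ⟨19, by decide, (Subtype.ext (hl.trans (plEq_eq h))).symm⟩),
    Finset.mem_coe.2 (Finset.mem_image.2 ⟨22, by decide, (Subtype.ext (hl.trans (plEq_eq h))).symm⟩),
    Finset.mem_coe.2 (Finset.mem_image.2 ⟨23, by decide, (Subtype.ext (hl.trans (plEq_eq h))).symm⟩),
    Finset.mem_coe.2 (Finset.mem_image.2 ⟨25, by decide, (Subtype.ext (hl.trans (plEq_eq h))).symm⟩)]
set_option maxHeartbeats 1000000 in
lemma key5_p1 : ∀ c1 : V, indep e0 c1 (e0 + c1 + e3 + u) e3 →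
    Ck5 e0 c1 (e0 + c1 + e3 + u) e3 := by decide
set_option maxHeartbeats 1000000 in
lemma key5_p2 : ∀ c1 : V, indep e0 c1 (e0 + c1 + u + e3) u →
    Ck5 e0 c1 (e0 + c1 + u + e3) u := by decide
set_option maxHeartbeats 1000000 in
lemma key5_p3 : ∀ c1 : V, indep e3 c1 (e3 + c1 + e0 + u) e0 →
    Ck5 e3 c1 (e3 + c1 + e0 + u) e0 := by decide
set_option maxHeartbeats 1000000 in
lemma key5_p4 : ∀ c1 : V, indep e3 c1 (e3 + c1 + u + e0) u →
    Ck5 e3 c1 (e3 + c1 + u + e0) u := by decide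
set_option maxHeartbeats 1000000 in
lemma key5_p5 : ∀ c1 : V, indep u c1 (u + c1 + e0 + e3) e0 →
    Ck5 u c1 (u + c1 + e0 + e3) e0 := by decide
set_option maxHeartbeats 1000000 in
lemma key5_p6 : ∀ c1 : V, indep u c1 (u + c1 + e3 + e0) e3 →
    Ck5 u c1 (u + c1 + e3 + e0) e3 := by decide
lemma orbit_sub5 : lineOrbit2 (lineOf 0) ⊆ O5' := by
  rintro l' ⟨g, himg, hmap⟩
  have hl := map_line hmap
  rw [show repA (0 : Fin 35) = e0 by decide, show repB (0 : Fin 35) = e1 by decide] at hl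
  try simp only [map_add] at hl
  have hD := toD g himg
  rcases hD with ⟨h0, h3, hs⟩ | ⟨h0, h3, hs⟩ | ⟨h0, h3, hs⟩ | ⟨h0, h3, hs⟩ | ⟨h0, h3, hs⟩ | ⟨h0, h3, hs⟩
  · have hc2 : g e2 = g e0 + g e1 + g e3 + u :=
      c2_eqV _ _ _ _ _ (hs.symm.trans (g_u g))
    have hind := g_indep g
    rw [hc2] at hind
    rw [h0, h3] at hind
    have hK := key5_p1 (g e1) hind
    simp only [hc2, h0, h3] at hl
    exact mem_of_Ck5 hK hl
  · have hc2 : g e2 = g e0 + g e1 + g e3 + e3 :=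
      c2_eqV _ _ _ _ _ (hs.symm.trans (g_u g))
    have hind := g_indep g
    rw [hc2] at hind
    rw [h0, h3] at hind
    have hK := key5_p2 (g e1) hind
    simp only [hc2, h0, h3] at hl
    exact mem_of_Ck5 hK hl
  · have hc2 : g e2 = g e0 + g e1 + g e3 + u :=
      c2_eqV _ _ _ _ _ (hs.symm.trans (g_u g))
    have hind := g_indep g
    rw [hc2] at hind
    rw [h0, h3] at hind
    have hK := key5_p3 (g e1) hind
    simp only [hc2, h0, h3] at hl
    exact mem_of_Ck5 hK hl
  · have hc2 : g e2 = g e0 + g e1 + g e3 + e0 :=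
      c2_eqV _ _ _ _ _ (hs.symm.trans (g_u g))
    have hind := g_indep g
    rw [hc2] at hind
    rw [h0, h3] at hind
    have hK := key5_p4 (g e1) hind
    simp only [hc2, h0, h3] at hl
    exact mem_of_Ck5 hK hl
  · have hc2 : g e2 = g e0 + g e1 + g e3 + e3 :=
      c2_eqV _ _ _ _ _ (hs.symm.trans (g_u g))
    have hind := g_indep g
    rw [hc2] at hind
    rw [h0, h3] at hind
    have hK := key5_p5 (g e1) hind
    simp only [hc2, h0, h3] at hl
    exact mem_of_Ck5 hK hl
  · have hc2 : g e2 = g e0 + g e1 + g e3 + e0 :=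
      c2_eqV _ _ _ _ _ (hs.symm.trans (g_u g))
    have hind := g_indep g
    rw [hc2] at hind
    rw [h0, h3] at hind
    have hK := key5_p6 (g e1) hind
    simp only [hc2, h0, h3] at hl
    exact mem_of_Ck5 hK hl
lemma w5_0 : lineOf 0 ∈ lineOrbit2 (lineOf 0) :=
  wit_helper (i := 0) (j := 0) ![![1,0,0,0], ![0,1,0,0], ![0,0,1,0], ![0,0,0,1]] ![![1,0,0,0], ![0,1,0,0], ![0,0,1,0], ![0,0,0,1]] (by decide) (by decide) (by decide) (by decide)
lemma w5_1 : lineOf 1 ∈ lineOrbit2 (lineOf 0) :=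
  wit_helper (i := 0) (j := 1) ![![1,0,0,0], ![0,0,1,0], ![0,1,0,0], ![0,0,0,1]] ![![1,0,0,0], ![0,0,1,0], ![0,1,0,0], ![0,0,0,1]] (by decide) (by decide) (by decide) (by decide)
lemma w5_4 : lineOf 4 ∈ lineOrbit2 (lineOf 0) :=
  wit_helper (i := 0) (j := 4) ![![1,0,0,0], ![0,1,0,1], ![0,0,1,1], ![0,0,0,1]] ![![1,0,0,0], ![0,1,0,1], ![0,0,1,1], ![0,0,0,1]] (by decide) (by decide) (by decide) (by decide)
lemma w5_5 : lineOf 5 ∈ lineOrbit2 (lineOf 0) :=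
  wit_helper (i := 0) (j := 5) ![![1,0,0,0], ![0,0,1,1], ![0,1,0,1], ![0,0,0,1]] ![![1,0,0,0], ![0,0,1,1], ![0,1,0,1], ![0,0,0,1]] (by decide) (by decide) (by decide) (by decide)
lemma w5_9 : lineOf 9 ∈ lineOrbit2 (lineOf 0) :=
  wit_helper (i := 0) (j := 9) ![![0,0,0,1], ![0,1,0,0], ![0,0,1,0], ![1,0,0,0]] ![![0,0,0,1], ![0,1,0,0], ![0,0,1,0], ![1,0,0,0]] (by decide) (by decide) (by decide) (by decide)
lemma w5_12 : lineOf 12 ∈ lineOrbit2 (lineOf 0) :=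
  wit_helper (i := 0) (j := 12) ![![1,1,1,1], ![0,1,0,0], ![0,0,1,0], ![1,0,0,0]] ![![0,0,0,1], ![0,1,0,0], ![0,0,1,0], ![1,1,1,1]] (by decide) (by decide) (by decide) (by decide)
lemma w5_15 : lineOf 15 ∈ lineOrbit2 (lineOf 0) :=
  wit_helper (i := 0) (j := 15) ![![0,0,0,1], ![1,1,0,0], ![1,0,1,0], ![1,0,0,0]] ![![0,0,0,1], ![0,1,0,1], ![0,0,1,1], ![1,0,0,0]] (by decide) (by decide) (by decide) (by decide)
lemma w5_17 : lineOf 17 ∈ lineOrbit2 (lineOf 0) :=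
  wit_helper (i := 0) (j := 17) ![![1,1,1,1], ![1,1,0,0], ![1,0,1,0], ![1,0,0,0]] ![![0,0,0,1], ![0,1,0,1], ![0,0,1,1], ![1,1,1,1]] (by decide) (by decide) (by decide) (by decide)
lemma w5_19 : lineOf 19 ∈ lineOrbit2 (lineOf 0) :=
  wit_helper (i := 0) (j := 19) ![![0,0,0,1], ![0,0,1,0], ![0,1,0,0], ![1,0,0,0]] ![![0,0,0,1], ![0,0,1,0], ![0,1,0,0], ![1,0,0,0]] (by decide) (by decide) (by decide) (by decide)
lemma w5_22 : lineOf 22 ∈ lineOrbit2 (lineOf 0) :=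
  wit_helper (i := 0) (j := 22) ![![1,1,1,1], ![0,0,1,0], ![0,1,0,0], ![1,0,0,0]] ![![0,0,0,1], ![0,0,1,0], ![0,1,0,0], ![1,1,1,1]] (by decide) (by decide) (by decide) (by decide)
lemma w5_23 : lineOf 23 ∈ lineOrbit2 (lineOf 0) :=
  wit_helper (i := 0) (j := 23) ![![0,0,0,1], ![1,0,1,0], ![1,1,0,0], ![1,0,0,0]] ![![0,0,0,1], ![0,0,1,1], ![0,1,0,1], ![1,0,0,0]] (by decide) (by decide) (by decide) (by decide)
lemma w5_25 : lineOf 25 ∈ lineOrbit2 (lineOf 0) :=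
  wit_helper (i := 0) (j := 25) ![![1,1,1,1], ![1,0,1,0], ![1,1,0,0], ![1,0,0,0]] ![![0,0,0,1], ![0,0,1,1], ![0,1,0,1], ![1,1,1,1]] (by decide) (by decide) (by decide) (by decide)
lemma orbit_eq5 : lineOrbit2 (lineOf 0) = O5' := by
  refine Set.Subset.antisymm orbit_sub5 ?_
  intro l' hl'
  rw [O5', Finset.mem_coe, Finset.mem_image] at hl'
  obtain ⟨j, hj, rfl⟩ := hl'
  fin_cases hj
  exacts [w5_0, w5_1, w5_4, w5_5, w5_9, w5_12, w5_15, w5_17, w5_19, w5_22, w5_23, w5_25]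
def I6 : Finset (Fin 35) := {8, 10, 11, 13, 16, 18, 20, 21, 24, 26, 33, 34}
def Ck6 (c0 c1 c2 c3 : V) : Prop :=
  plEq (c1) (c0 + c2) (repA 8) (repB 8) ∨
  plEq (c1) (c0 + c2) (repA 10) (repB 10) ∨
  plEq (c1) (c0 + c2) (repA 11) (repB 11) ∨
  plEq (c1) (c0 + c2) (repA 13) (repB 13) ∨
  plEq (c1) (c0 + c2) (repA 16) (repB 16) ∨
  plEq (c1) (c0 + c2) (repA 18) (repB 18) ∨
  plEq (c1) (c0 + c2) (repA 20) (repB 20) ∨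
  plEq (c1) (c0 + c2) (repA 21) (repB 21) ∨
  plEq (c1) (c0 + c2) (repA 24) (repB 24) ∨
  plEq (c1) (c0 + c2) (repA 26) (repB 26) ∨
  plEq (c1) (c0 + c2) (repA 33) (repB 33) ∨
  plEq (c1) (c0 + c2) (repA 34) (repB 34)
instance (c0 c1 c2 c3 : V) : Decidable (Ck6 c0 c1 c2 c3) := by unfold Ck6; infer_instance
def O6' : Set Line2 := ↑(I6.image lineOf)
lemma mem_of_Ck6 {c0 c1 c2 c3 : V} {l' : Line2} (hC : Ck6 c0 c1 c2 c3)
    (hl : l'.1 = pl (c1) (c0 + c2)) : l' ∈ O6' := by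
  rcases hC with h | h | h | h | h | h | h | h | h | h | h | h
  exacts [Finset.mem_coe.2 (Finset.mem_image.2 ⟨8, by decide, (Subtype.ext (hl.trans (plEq_eq h))).symm⟩),
    Finset.mem_coe.2 (Finset.mem_image.2 ⟨10, by decide, (Subtype.ext (hl.trans (plEq_eq h))).symm⟩),
    Finset.mem_coe.2 (Finset.mem_image.2 ⟨11, by decide, (Subtype.ext (hl.trans (plEq_eq h))).symm⟩),
    Finset.mem_coe.2 (Finset.mem_image.2 ⟨13, by decide, (Subtype.ext (hl.trans (plEq_eq h))).symm⟩),
    Finset.mem_coe.2 (Finset.mem_image.2 ⟨16, by decide, (Subtype.ext (hl.trans (plEq_eq h))).symm⟩),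
    Finset.mem_coe.2 (Finset.mem_image.2 ⟨18, by decide, (Subtype.ext (hl.trans (plEq_eq h))).symm⟩),
    Finset.mem_coe.2 (Finset.mem_image.2 ⟨20, by decide, (Subtype.ext (hl.trans (plEq_eq h))).symm⟩),
    Finset.mem_coe.2 (Finset.mem_image.2 ⟨21, by decide, (Subtype.ext (hl.trans (plEq_eq h))).symm⟩),
    Finset.mem_coe.2 (Finset.mem_image.2 ⟨24, by decide, (Subtype.ext (hl.trans (plEq_eq h))).symm⟩),
    Finset.mem_coe.2 (Finset.mem_image.2 ⟨26, by decide, (Subtype.ext (hl.trans (plEq_eq h))).symm⟩),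
    Finset.mem_coe.2 (Finset.mem_image.2 ⟨33, by decide, (Subtype.ext (hl.trans (plEq_eq h))).symm⟩),
    Finset.mem_coe.2 (Finset.mem_image.2 ⟨34, by decide, (Subtype.ext (hl.trans (plEq_eq h))).symm⟩)]
set_option maxHeartbeats 1000000 in
lemma key6_p1 : ∀ c1 : V, indep e0 c1 (e0 + c1 + e3 + u) e3 →
    Ck6 e0 c1 (e0 + c1 + e3 + u) e3 := by decide
set_option maxHeartbeats 1000000 in
lemma key6_p2 : ∀ c1 : V, indep e0 c1 (e0 + c1 + u + e3) u →
    Ck6 e0 c1 (e0 + c1 + u + e3) u := by decide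
set_option maxHeartbeats 1000000 in
lemma key6_p3 : ∀ c1 : V, indep e3 c1 (e3 + c1 + e0 + u) e0 →
    Ck6 e3 c1 (e3 + c1 + e0 + u) e0 := by decide
set_option maxHeartbeats 1000000 in
lemma key6_p4 : ∀ c1 : V, indep e3 c1 (e3 + c1 + u + e0) u →
    Ck6 e3 c1 (e3 + c1 + u + e0) u := by decide
set_option maxHeartbeats 1000000 in
lemma key6_p5 : ∀ c1 : V, indep u c1 (u + c1 + e0 + e3) e0 →
    Ck6 u c1 (u + c1 + e0 + e3) e0 := by decide
set_option maxHeartbeats 1000000 in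
lemma key6_p6 : ∀ c1 : V, indep u c1 (u + c1 + e3 + e0) e3 →
    Ck6 u c1 (u + c1 + e3 + e0) e3 := by decide
lemma orbit_sub6 : lineOrbit2 (lineOf 8) ⊆ O6' := by
  rintro l' ⟨g, himg, hmap⟩
  have hl := map_line hmap
  rw [show repA (8 : Fin 35) = e1 by decide, show repB (8 : Fin 35) = e0 + e2 by decide] at hl
  try simp only [map_add] at hl
  have hD := toD g himg
  rcases hD with ⟨h0, h3, hs⟩ | ⟨h0, h3, hs⟩ | ⟨h0, h3, hs⟩ | ⟨h0, h3, hs⟩ | ⟨h0, h3, hs⟩ | ⟨h0, h3, hs⟩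
  · have hc2 : g e2 = g e0 + g e1 + g e3 + u :=
      c2_eqV _ _ _ _ _ (hs.symm.trans (g_u g))
    have hind := g_indep g
    rw [hc2] at hind
    rw [h0, h3] at hind
    have hK := key6_p1 (g e1) hind
    simp only [hc2, h0, h3] at hl
    exact mem_of_Ck6 hK hl
  · have hc2 : g e2 = g e0 + g e1 + g e3 + e3 :=
      c2_eqV _ _ _ _ _ (hs.symm.trans (g_u g))
    have hind := g_indep g
    rw [hc2] at hind
    rw [h0, h3] at hind
    have hK := key6_p2 (g e1) hind
    simp only [hc2, h0, h3] at hl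
    exact mem_of_Ck6 hK hl
  · have hc2 : g e2 = g e0 + g e1 + g e3 + u :=
      c2_eqV _ _ _ _ _ (hs.symm.trans (g_u g))
    have hind := g_indep g
    rw [hc2] at hind
    rw [h0, h3] at hind
    have hK := key6_p3 (g e1) hind
    simp only [hc2, h0, h3] at hl
    exact mem_of_Ck6 hK hl
  · have hc2 : g e2 = g e0 + g e1 + g e3 + e0 :=
      c2_eqV _ _ _ _ _ (hs.symm.trans (g_u g))
    have hind := g_indep g
    rw [hc2] at hind
    rw [h0, h3] at hind
    have hK := key6_p4 (g e1) hind
    simp only [hc2, h0, h3] at hl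
    exact mem_of_Ck6 hK hl
  · have hc2 : g e2 = g e0 + g e1 + g e3 + e3 :=
      c2_eqV _ _ _ _ _ (hs.symm.trans (g_u g))
    have hind := g_indep g
    rw [hc2] at hind
    rw [h0, h3] at hind
    have hK := key6_p5 (g e1) hind
    simp only [hc2, h0, h3] at hl
    exact mem_of_Ck6 hK hl
  · have hc2 : g e2 = g e0 + g e1 + g e3 + e0 :=
      c2_eqV _ _ _ _ _ (hs.symm.trans (g_u g))
    have hind := g_indep g
    rw [hc2] at hind
    rw [h0, h3] at hind
    have hK := key6_p6 (g e1) hind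
    simp only [hc2, h0, h3] at hl
    exact mem_of_Ck6 hK hl
lemma w6_8 : lineOf 8 ∈ lineOrbit2 (lineOf 8) :=
  wit_helper (i := 8) (j := 8) ![![1,0,0,0], ![0,1,0,0], ![0,0,1,0], ![0,0,0,1]] ![![1,0,0,0], ![0,1,0,0], ![0,0,1,0], ![0,0,0,1]] (by decide) (by decide) (by decide) (by decide)
lemma w6_10 : lineOf 10 ∈ lineOrbit2 (lineOf 8) :=
  wit_helper (i := 8) (j := 10) ![![1,1,1,1], ![0,1,0,0], ![0,0,1,0], ![1,0,0,0]] ![![0,0,0,1], ![0,1,0,0], ![0,0,1,0], ![1,1,1,1]] (by decide) (by decide) (by decide) (by decide)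
lemma w6_11 : lineOf 11 ∈ lineOrbit2 (lineOf 8) :=
  wit_helper (i := 8) (j := 11) ![![0,0,0,1], ![0,1,0,0], ![0,0,1,0], ![1,0,0,0]] ![![0,0,0,1], ![0,1,0,0], ![0,0,1,0], ![1,0,0,0]] (by decide) (by decide) (by decide) (by decide)
lemma w6_13 : lineOf 13 ∈ lineOrbit2 (lineOf 8) :=
  wit_helper (i := 8) (j := 13) ![![1,0,0,0], ![1,1,0,0], ![1,0,1,0], ![0,0,0,1]] ![![1,0,0,0], ![1,1,0,0], ![1,0,1,0], ![0,0,0,1]] (by decide) (by decide) (by decide) (by decide)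
lemma w6_16 : lineOf 16 ∈ lineOrbit2 (lineOf 8) :=
  wit_helper (i := 8) (j := 16) ![![1,1,1,1], ![1,1,0,0], ![1,0,1,0], ![1,0,0,0]] ![![0,0,0,1], ![0,1,0,1], ![0,0,1,1], ![1,1,1,1]] (by decide) (by decide) (by decide) (by decide)
lemma w6_18 : lineOf 18 ∈ lineOrbit2 (lineOf 8) :=
  wit_helper (i := 8) (j := 18) ![![0,0,0,1], ![1,1,0,0], ![1,0,1,0], ![1,0,0,0]] ![![0,0,0,1], ![0,1,0,1], ![0,0,1,1], ![1,0,0,0]] (by decide) (by decide) (by decide) (by decide)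
lemma w6_20 : lineOf 20 ∈ lineOrbit2 (lineOf 8) :=
  wit_helper (i := 8) (j := 20) ![![1,1,1,1], ![0,0,1,0], ![0,1,0,0], ![1,0,0,0]] ![![0,0,0,1], ![0,0,1,0], ![0,1,0,0], ![1,1,1,1]] (by decide) (by decide) (by decide) (by decide)
lemma w6_21 : lineOf 21 ∈ lineOrbit2 (lineOf 8) :=
  wit_helper (i := 8) (j := 21) ![![0,0,0,1], ![0,0,1,0], ![0,1,0,0], ![1,0,0,0]] ![![0,0,0,1], ![0,0,1,0], ![0,1,0,0], ![1,0,0,0]] (by decide) (by decide) (by decide) (by decide)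
lemma w6_24 : lineOf 24 ∈ lineOrbit2 (lineOf 8) :=
  wit_helper (i := 8) (j := 24) ![![1,1,1,1], ![1,0,1,0], ![1,1,0,0], ![1,0,0,0]] ![![0,0,0,1], ![0,0,1,1], ![0,1,0,1], ![1,1,1,1]] (by decide) (by decide) (by decide) (by decide)
lemma w6_26 : lineOf 26 ∈ lineOrbit2 (lineOf 8) :=
  wit_helper (i := 8) (j := 26) ![![0,0,0,1], ![1,0,1,0], ![1,1,0,0], ![1,0,0,0]] ![![0,0,0,1], ![0,0,1,1], ![0,1,0,1], ![1,0,0,0]] (by decide) (by decide) (by decide) (by decide)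
lemma w6_33 : lineOf 33 ∈ lineOrbit2 (lineOf 8) :=
  wit_helper (i := 8) (j := 33) ![![1,0,0,0], ![0,1,0,1], ![0,0,1,1], ![0,0,0,1]] ![![1,0,0,0], ![0,1,0,1], ![0,0,1,1], ![0,0,0,1]] (by decide) (by decide) (by decide) (by decide)
lemma w6_34 : lineOf 34 ∈ lineOrbit2 (lineOf 8) :=
  wit_helper (i := 8) (j := 34) ![![1,0,0,0], ![1,1,0,1], ![1,0,1,1], ![0,0,0,1]] ![![1,0,0,0], ![1,1,0,1], ![1,0,1,1], ![0,0,0,1]] (by decide) (by decide) (by decide) (by decide)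
lemma orbit_eq6 : lineOrbit2 (lineOf 8) = O6' := by
  refine Set.Subset.antisymm orbit_sub6 ?_
  intro l' hl'
  rw [O6', Finset.mem_coe, Finset.mem_image] at hl'
  obtain ⟨j, hj, rfl⟩ := hl'
  fin_cases hj
  exacts [w6_8, w6_10, w6_11, w6_13, w6_16, w6_18, w6_20, w6_21, w6_24, w6_26, w6_33, w6_34]

lemma ne_helper {I J : Finset (Fin 35)} {r : Fin 35} (hr : r ∈ I) (hnr : r ∉ J) :
    (↑(I.image lineOf) : Set Line2) ≠ ↑(J.image lineOf) := by
  intro h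
  have hm : lineOf r ∈ (↑(J.image lineOf) : Set Line2) :=
    h ▸ Finset.mem_coe.2 (Finset.mem_image_of_mem _ hr)
  rw [Finset.mem_coe, Finset.mem_image] at hm
  obtain ⟨x, hx, he⟩ := hm
  exact hnr ((lineOf_inj he) ▸ hx)

lemma ncard_O {I : Finset (Fin 35)} :
    (↑(I.image lineOf) : Set Line2).ncard = I.card := by
  rw [Set.ncard_coe_finset, Finset.card_image_of_injective _ lineOf_inj]

/-- In `PG(3,2)`, the stabilizer `G₂` of the twisted cubic acts on the `35` lines of
`PG(3,2)` with exactly `6` orbits, of sizes `3, 1, 3, 4, 12, 12`. -/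
theorem line_orbits_PG32 :
    Nat.card Line2 = 35 ∧
    ∃ O₁ O₂ O₃ O₄ O₅ O₆ : Set Line2,
      ([O₁, O₂, O₃, O₄, O₅, O₆] : List (Set Line2)).Pairwise (· ≠ ·) ∧
      (∀ O ∈ ([O₁, O₂, O₃, O₄, O₅, O₆] : List (Set Line2)), ∃ l, lineOrbit2 l = O) ∧
      O₁.ncard = 3 ∧ O₂.ncard = 1 ∧ O₃.ncard = 3 ∧ O₄.ncard = 4 ∧
      O₅.ncard = 12 ∧ O₆.ncard = 12 ∧
      ∀ l, lineOrbit2 l ∈ ({O₁, O₂, O₃, O₄, O₅, O₆} : Set (Set Line2)) := by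
  refine ⟨card_Line2, O1', O2', O3', O4', O5', O6', ?_, ?_, ?_, ?_, ?_, ?_, ?_, ?_, ?_⟩
  · refine List.Pairwise.cons ?_ (List.Pairwise.cons ?_ (List.Pairwise.cons ?_
      (List.Pairwise.cons ?_ (List.Pairwise.cons ?_ (List.pairwise_singleton _ _)))))
    · intro x hx
      simp only [List.mem_cons, List.mem_singleton, List.not_mem_nil, or_false] at hx
      rcases hx with rfl | rfl | rfl | rfl | rfl
      · exact ne_helper (I := I1) (J := I2) (r := 2) (by decide) (by decide)
      · exact ne_helper (I := I1) (J := I3) (r := 2) (by decide) (by decide)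
      · exact ne_helper (I := I1) (J := I4) (r := 2) (by decide) (by decide)
      · exact ne_helper (I := I1) (J := I5) (r := 2) (by decide) (by decide)
      · exact ne_helper (I := I1) (J := I6) (r := 2) (by decide) (by decide)
    · intro x hx
      simp only [List.mem_cons, List.mem_singleton, List.not_mem_nil, or_false] at hx
      rcases hx with rfl | rfl | rfl | rfl
      · exact ne_helper (I := I2) (J := I3) (r := 32) (by decide) (by decide)
      · exact ne_helper (I := I2) (J := I4) (r := 32) (by decide) (by decide)
      · exact ne_helper (I := I2) (J := I5) (r := 32) (by decide) (by decide)
      · exact ne_helper (I := I2) (J := I6) (r := 32) (by decide) (by decide)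
    · intro x hx
      simp only [List.mem_cons, List.mem_singleton, List.not_mem_nil, or_false] at hx
      rcases hx with rfl | rfl | rfl
      · exact ne_helper (I := I3) (J := I4) (r := 3) (by decide) (by decide)
      · exact ne_helper (I := I3) (J := I5) (r := 3) (by decide) (by decide)
      · exact ne_helper (I := I3) (J := I6) (r := 3) (by decide) (by decide)
    · intro x hx
      simp only [List.mem_cons, List.mem_singleton, List.not_mem_nil, or_false] at hx
      rcases hx with rfl | rfl
      · exact ne_helper (I := I4) (J := I5) (r := 7) (by decide) (by decide)
      · exact ne_helper (I := I4) (J := I6) (r := 7) (by decide) (by decide)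
    · intro x hx
      simp only [List.mem_cons, List.mem_singleton, List.not_mem_nil, or_false] at hx
      rcases hx with rfl
      · exact ne_helper (I := I5) (J := I6) (r := 0) (by decide) (by decide)
  · intro O hO
    simp only [List.mem_cons, List.not_mem_nil, or_false] at hO
    rcases hO with rfl | rfl | rfl | rfl | rfl | rfl
    · exact ⟨lineOf 2, orbit_eq1⟩
    · exact ⟨lineOf 32, orbit_eq2⟩
    · exact ⟨lineOf 3, orbit_eq3⟩
    · exact ⟨lineOf 7, orbit_eq4⟩
    · exact ⟨lineOf 0, orbit_eq5⟩
    · exact ⟨lineOf 8, orbit_eq6⟩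
  · exact ncard_O.trans rfl
  · exact ncard_O.trans rfl
  · exact ncard_O.trans rfl
  · exact ncard_O.trans rfl
  · exact ncard_O.trans rfl
  · exact ncard_O.trans rfl
  · intro l
    obtain ⟨j, rfl⟩ := lineOf_surj l
    have hj : j ∈ I1 ∨ j ∈ I2 ∨ j ∈ I3 ∨ j ∈ I4 ∨ j ∈ I5 ∨ j ∈ I6 := by
      revert j; decide
    simp only [Set.mem_insert_iff, Set.mem_singleton_iff]
    rcases hj with hj | hj | hj | hj | hj | hj
    · have hm : lineOf j ∈ O1' := Finset.mem_coe.2 (Finset.mem_image_of_mem _ hj)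
      have := (orbit_eq_of_mem (orbit_eq1 ▸ hm)).trans orbit_eq1
      exact Or.inl this
    · have hm : lineOf j ∈ O2' := Finset.mem_coe.2 (Finset.mem_image_of_mem _ hj)
      have := (orbit_eq_of_mem (orbit_eq2 ▸ hm)).trans orbit_eq2
      exact Or.inr (Or.inl this)
    · have hm : lineOf j ∈ O3' := Finset.mem_coe.2 (Finset.mem_image_of_mem _ hj)
      have := (orbit_eq_of_mem (orbit_eq3 ▸ hm)).trans orbit_eq3
      exact Or.inr (Or.inr (Or.inl this))
    · have hm : lineOf j ∈ O4' := Finset.mem_coe.2 (Finset.mem_image_of_mem _ hj)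
      have := (orbit_eq_of_mem (orbit_eq4 ▸ hm)).trans orbit_eq4
      exact Or.inr (Or.inr (Or.inr (Or.inl this)))
    · have hm : lineOf j ∈ O5' := Finset.mem_coe.2 (Finset.mem_image_of_mem _ hj)
      have := (orbit_eq_of_mem (orbit_eq5 ▸ hm)).trans orbit_eq5
      exact Or.inr (Or.inr (Or.inr (Or.inr (Or.inl this))))
    · have hm : lineOf j ∈ O6' := Finset.mem_coe.2 (Finset.mem_image_of_mem _ hj)
      have := (orbit_eq_of_mem (orbit_eq6 ▸ hm)).trans orbit_eq6
      exact Or.inr (Or.inr (Or.inr (Or.inr (Or.inr this))))
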